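/- For total bandwidth B > 0 and constant c > 0, the per-node service rate μ(J) = (B/((J+1)K))·log₂(1 + c(J+1)/B) as a function of the number of neighbors J ∈ ℕ is strictly decreasing in J. -/

import Mathlib

lemma aux_hasDeriv (c : ℝ) (hc : 0 < c) {t : ℝ} (ht : 0 < t) :
    HasDerivAt (fun t : ℝ => t * Real.log (1 + c / t))
      (Real.log (1 + c / t) - c / (t + c)) t := by
  have hpos : 0 < 1 + c / t := by positivity
  have h1 : HasDerivAt (fun t : ℝ => 1 + c / t) (c * (-(t ^ 2)⁻¹)) t := by
    simpa [div_eq_mul_inv] using ((hasDerivAt_inv ht.ne').const_mul c).const_add 1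
  have h2 := (h1.log hpos.ne')
  have h3 : HasDerivAt (fun y : ℝ => y * Real.log (1 + c / y)) _ t := (hasDerivAt_id' t).mul h2
  convert h3 using 1
  field_simp
  ring

lemma aux_strictMono (c : ℝ) (hc : 0 < c) :
    StrictMonoOn (fun t : ℝ => t * Real.log (1 + c / t)) (Set.Ioi 0) := by
  apply strictMonoOn_of_deriv_pos (convex_Ioi 0)
  · exact continuousOn_of_forall_continuousAt fun t ht =>
      (aux_hasDeriv c hc (Set.mem_Ioi.mp ht)).continuousAt
  · intro t ht
    rw [interior_Ioi] at ht
    have ht : 0 < t := ht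
    rw [(aux_hasDeriv c hc ht).deriv]
    have hpos : 0 < 1 + c / t := by positivity
    -- log(1+c/t) > (c/t)/(1+c/t) = c/(t+c)
    have key : Real.log (1 + c / t)⁻¹ < (1 + c / t)⁻¹ - 1 := by
      apply Real.log_lt_sub_one_of_pos (by positivity)
      intro h
      have : (1 : ℝ) + c / t = 1 := by
        field_simp at h; linarith [h]
      nlinarith [div_pos hc ht]
    rw [Real.log_inv] at key
    have h2 : 1 - (1 + c / t)⁻¹ = c / (t + c) := by
      rw [inv_eq_one_div]
      field_simp
      ring
    linarith [key, h2.symm ▸ (by linarith : 1 - (1 + c/t)⁻¹ < Real.log (1 + c/t))]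

/-- For total bandwidth `B > 0` and constants `c, K > 0`, the per-node service rate
`μ(J) = (B/((J+1)K))·log₂(1 + c(J+1)/B)` is strictly decreasing in the number of
neighbors `J ∈ ℕ`. -/
theorem per_node_rate_strictAnti (B c K : ℝ) (hB : 0 < B) (hc : 0 < c) (hK : 0 < K) :
    StrictAnti (fun J : ℕ =>
      (B / (((J : ℝ) + 1) * K)) * Real.logb 2 (1 + c * ((J : ℝ) + 1) / B)) := by
  intro m n hmn
  have hm : (0 : ℝ) < (m : ℝ) + 1 := by positivity
  have hn : (0 : ℝ) < (n : ℝ) + 1 := by positivity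
  have hmn' : (m : ℝ) + 1 < (n : ℝ) + 1 := by exact_mod_cast by omega
  have hWn : B / ((n : ℝ) + 1) ∈ Set.Ioi (0:ℝ) := Set.mem_Ioi.mpr (by positivity)
  have hWm : B / ((m : ℝ) + 1) ∈ Set.Ioi (0:ℝ) := Set.mem_Ioi.mpr (by positivity)
  have hWlt : B / ((n : ℝ) + 1) < B / ((m : ℝ) + 1) :=
    div_lt_div_of_pos_left hB hm hmn'
  have h := aux_strictMono c hc hWn hWm hWlt
  have rw1 : ∀ J : ℕ, (B / (((J : ℝ) + 1) * K)) * Real.logb 2 (1 + c * ((J : ℝ) + 1) / B)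
      = (B / ((J : ℝ) + 1) * Real.log (1 + c / (B / ((J : ℝ) + 1)))) * (1 / (K * Real.log 2)) := by
    intro J
    have hJ : (0 : ℝ) < (J : ℝ) + 1 := by positivity
    have hlog2 : Real.log 2 ≠ 0 := (Real.log_pos (by norm_num)).ne'
    have harg : c / (B / ((J : ℝ) + 1)) = c * ((J : ℝ) + 1) / B := by
      rw [div_div_eq_mul_div, mul_comm c, mul_div_assoc]
    rw [Real.logb, harg]
    set L := Real.log (1 + c * ((J : ℝ) + 1) / B) with hL
    field_simp
  simp only [rw1]
  have hlog2 : 0 < Real.log 2 := Real.log_pos (by norm_num)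
  have hpos : 0 < 1 / (K * Real.log 2) := by positivity
  exact mul_lt_mul_of_pos_right h hpos
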